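/- In a complete SPN, for every sum node v the scope of v equals the scope of each of its children, and every monomial in the fully expanded sum-of-products form of the network polynomial f_v contains exactly one indicator for each variable in scope(v). -/

import Mathlib

noncomputable section

open Finset

/-- A Sum-Product Network over `N` Boolean variables: leaves are indicators
`I[X_i = b]`, internal nodes are weighted sums and products. -/
inductive SPN (N : ℕ) where
  | leaf (i : Fin N) (b : Bool)
  | sum (k : ℕ) (w : Fin k → ℝ) (ch : Fin k → SPN N)
  | prod (k : ℕ) (ch : Fin k → SPN N)

namespace SPN

variable {N : ℕ}

/-- The network polynomial, evaluated at a complete assignment. -/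
def eval : SPN N → (Fin N → Bool) → ℝ
  | .leaf i b, x => if x i = b then 1 else 0
  | .sum _ w ch, x => ∑ j, w j * eval (ch j) x
  | .prod _ ch, x => ∏ j, eval (ch j) x

/-- The scope of a node: the variables appearing among its descendant indicators. -/
def scope : SPN N → Finset (Fin N)
  | .leaf i _ => {i}
  | .sum _ _ ch => univ.biUnion fun j => scope (ch j)
  | .prod _ ch => univ.biUnion fun j => scope (ch j)

/-- Size of an SPN: number of nodes plus number of edges. -/
def size : SPN N → ℕ
  | .leaf _ _ => 1
  | .sum k _ ch => 1 + k + ∑ j, size (ch j)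
  | .prod k ch => 1 + k + ∑ j, size (ch j)

/-- Completeness: all children of every sum node have the same scope. -/
def complete : SPN N → Prop
  | .leaf _ _ => True
  | .sum _ _ ch => (∀ i j, scope (ch i) = scope (ch j)) ∧ ∀ j, complete (ch j)
  | .prod _ ch => ∀ j, complete (ch j)

/-- Decomposability: children of every product node have pairwise disjoint scopes. -/
def decomposable : SPN N → Prop
  | .leaf _ _ => True
  | .sum _ _ ch => ∀ j, decomposable (ch j)
  | .prod _ ch =>
      (∀ i j, i ≠ j → Disjoint (scope (ch i)) (scope (ch j))) ∧ ∀ j, decomposable (ch j)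

/-- The set of indicators `(variable, value)` appearing among descendants. -/
def indicators : SPN N → Finset (Fin N × Bool)
  | .leaf i b => {(i, b)}
  | .sum _ _ ch => univ.biUnion fun j => indicators (ch j)
  | .prod _ ch => univ.biUnion fun j => indicators (ch j)

/-- Consistency: no variable appears negated in one child of a product node and
non-negated in another child. -/
def consistent : SPN N → Prop
  | .leaf _ _ => True
  | .sum _ _ ch => ∀ j, consistent (ch j)
  | .prod _ ch =>
      (∀ i j X, i ≠ j → (X, true) ∈ indicators (ch i) →
        (X, false) ∈ indicators (ch j) → False) ∧ ∀ j, consistent (ch j)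

/-- All sum-node weights are nonnegative. -/
def nonnegWeights : SPN N → Prop
  | .leaf _ _ => True
  | .sum _ w ch => (∀ j, 0 ≤ w j) ∧ ∀ j, nonnegWeights (ch j)
  | .prod _ ch => ∀ j, nonnegWeights (ch j)

/-- Weight-normalized: at every sum node the weights are nonnegative and sum to 1. -/
def weightNormalized : SPN N → Prop
  | .leaf _ _ => True
  | .sum _ w ch => (∀ j, 0 ≤ w j) ∧ (∑ j, w j) = 1 ∧ ∀ j, weightNormalized (ch j)
  | .prod _ ch => ∀ j, weightNormalized (ch j)

/-- Extend an assignment of the scope variables to a complete assignment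
(variables outside the scope are set to `false`; `eval` does not depend on them). -/
def extendScope (S : SPN N) (y : {i // i ∈ scope S} → Bool) : Fin N → Bool :=
  fun i => if h : i ∈ scope S then y ⟨i, h⟩ else false

/-- The sum of the network polynomial of `S` over all assignments of the
variables in `scope S`. -/
def val (S : SPN N) : ℝ :=
  ∑ y : {i // i ∈ scope S} → Bool, eval S (extendScope S y)

/-- The probability distribution induced by an SPN:
`Pr S x = f_S(x) / Σ_y f_S(y)`, the sum ranging over assignments of the scope. -/
def Pr (S : SPN N) (x : Fin N → Bool) : ℝ := eval S x / val S

end SPN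
namespace SPN

variable {N : ℕ}

/-- A monomial: a coefficient together with a multiset of indicators. -/
abbrev Monomial (N : ℕ) := ℝ × Multiset (Fin N × Bool)

/-- Product of two sum-of-products expansions. -/
def mulMono (a b : Multiset (Monomial N)) : Multiset (Monomial N) :=
  a.bind fun m => b.map fun m' => (m.1 * m'.1, m.2 + m'.2)

/-- The fully expanded sum-of-products form of the network polynomial,
obtained by distributing products over sums. -/
def monomials : SPN N → Multiset (Monomial N)
  | .leaf i b => {(1, {(i, b)})}
  | .sum _ w ch => ∑ j, (monomials (ch j)).map fun m => (w j * m.1, m.2)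
  | .prod k ch => (List.ofFn fun j : Fin k => monomials (ch j)).foldr mulMono {(1, 0)}

/-- Two SPNs have the same DAG structure (only sum-node weights may differ). -/
def sameShape : SPN N → SPN N → Prop
  | .leaf i b, .leaf i' b' => i = i' ∧ b = b'
  | .sum k _ ch, .sum k' _ ch' => ∃ h : k = k', ∀ j, sameShape (ch j) (ch' (Fin.cast h j))
  | .prod k ch, .prod k' ch' => ∃ h : k = k', ∀ j, sameShape (ch j) (ch' (Fin.cast h j))
  | _, _ => False

/-- `IsChild c p`: `c` is a child of `p`. -/
inductive IsChild : SPN N → SPN N → Prop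
  | sum {k : ℕ} {w : Fin k → ℝ} {ch : Fin k → SPN N} (j : Fin k) :
      IsChild (ch j) (.sum k w ch)
  | prod {k : ℕ} {ch : Fin k → SPN N} (j : Fin k) :
      IsChild (ch j) (.prod k ch)

/-- `Descendant d v`: `d` is a (weak) descendant of `v`. -/
def Descendant : SPN N → SPN N → Prop := Relation.ReflTransGen IsChild

/-- A decision stump: a univariate distribution `p·I[X=1] + (1-p)·I[X=0]`
over a single Boolean variable, used as terminal node of a normal SPN. -/
def isStump : SPN N → Prop
  | .sum 2 w ch =>
      (∃ i, ch 0 = .leaf i true ∧ ch 1 = .leaf i false) ∧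
      0 ≤ w 0 ∧ 0 ≤ w 1 ∧ w 0 + w 1 = 1
  | _ => False

/-- Condition 3 of normality: terminal nodes are univariate distributions and
every (proper) sum node has scope of size at least 2. -/
def normal3 : SPN N → Prop
  | .leaf _ _ => False
  | .sum k w ch =>
      isStump (SPN.sum k w ch) ∨
      (2 ≤ (scope (SPN.sum k w ch)).card ∧ ∀ j, normal3 (ch j))
  | .prod _ ch => ∀ j, normal3 (ch j)

/-- A normal SPN: complete, decomposable, weight-normalized, terminal nodes are
univariate distributions, and sum nodes have scope of size at least 2. -/
def normal (S : SPN N) : Prop :=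
  complete S ∧ decomposable S ∧ weightNormalized S ∧ normal3 S

/-- The height of an SPN: length of the longest root-to-leaf path. -/
def height : SPN N → ℕ
  | .leaf _ _ => 0
  | .sum _ _ ch => 1 + Finset.univ.sup fun j => height (ch j)
  | .prod _ ch => 1 + Finset.univ.sup fun j => height (ch j)

/-- Sum layers alternate with product layers. -/
def alternating : SPN N → Prop
  | .leaf _ _ => True
  | .sum _ _ ch => ∀ j,
      (¬ ∃ (k' : ℕ) (w' : Fin k' → ℝ) (ch' : Fin k' → SPN N), ch j = SPN.sum k' w' ch') ∧
      alternating (ch j)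
  | .prod _ ch => ∀ j,
      (¬ ∃ (k' : ℕ) (ch' : Fin k' → SPN N), ch j = SPN.prod k' ch') ∧
      alternating (ch j)

/-- The number of hidden-variable parents of the observable `X` in the constructed
BN: the number of sum nodes whose scope contains `X`. -/
def parentCount : SPN N → Fin N → ℕ
  | .leaf _ _, _ => 0
  | .sum k w ch, X =>
      (if X ∈ scope (SPN.sum k w ch) then 1 else 0) + ∑ j, parentCount (ch j) X
  | .prod _ ch, X => ∑ j, parentCount (ch j) X

/-- The number of sum nodes (hidden variables of the constructed BN). -/
def countSum : SPN N → ℕ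
  | .leaf _ _ => 0
  | .sum _ _ ch => 1 + ∑ j, countSum (ch j)
  | .prod _ ch => ∑ j, countSum (ch j)

/-- Total size of the decision-stump ADDs of the hidden variables. -/
def stumpsSize : SPN N → ℕ
  | .leaf _ _ => 0
  | .sum k _ ch => (1 + k) + ∑ j, stumpsSize (ch j)
  | .prod _ ch => ∑ j, stumpsSize (ch j)

/-- Total number of edges of the bipartite BN graph: a hidden variable `H_v`
points to observable `X` iff `X ∈ scope v`. -/
def sumScopeEdges : SPN N → ℕ
  | .leaf _ _ => 0
  | .sum k w ch => (scope (SPN.sum k w ch)).card + ∑ j, sumScopeEdges (ch j)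
  | .prod _ ch => ∑ j, sumScopeEdges (ch j)

/-- Size of the ADD `A_X` of observable `X`: the size of the sub-SPN induced by
the nodes whose scope contains `X` (an upper bound on the contracted ADD). -/
def addSize : SPN N → Fin N → ℕ
  | .leaf i _, X => if i = X then 1 else 0
  | .sum k w ch, X =>
      (if X ∈ scope (SPN.sum k w ch) then
        1 + (Finset.univ.filter fun j => X ∈ scope (ch j)).card
       else 0) + ∑ j, addSize (ch j) X
  | .prod k ch, X =>
      (if X ∈ scope (SPN.prod k ch) then
        1 + (Finset.univ.filter fun j => X ∈ scope (ch j)).card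
       else 0) + ∑ j, addSize (ch j) X

end SPN

/-- A bipartite Bayesian network over `N` observable Boolean variables:
hidden (source) variables `H` with unconditional priors, and observable
variables whose CPDs are conditioned on the hidden variables. -/
structure BayesNet (N : ℕ) where
  H : Type
  fintypeH : Fintype H
  decEqH : DecidableEq H
  dom : H → ℕ
  prior : (h : H) → Fin (dom h) → ℝ
  cpd : Fin N → ((h : H) → Fin (dom h)) → Bool → ℝ

attribute [instance] BayesNet.fintypeH BayesNet.decEqH

/-- The marginal distribution of the observables in a bipartite BN: sum over all
hidden assignments of the product of all priors and all CPDs. -/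
def BayesNet.PrB {N : ℕ} (B : BayesNet N) (x : Fin N → Bool) : ℝ :=
  ∑ σ : (h : B.H) → Fin (B.dom h),
    (∏ h, B.prior h (σ h)) * ∏ i, B.cpd i σ (x i)

namespace SPN

variable {N : ℕ}

lemma mem_mulMono {a b : Multiset (Monomial N)} {m : Monomial N} :
    m ∈ mulMono a b ↔ ∃ ma ∈ a, ∃ mb ∈ b, m = (ma.1 * mb.1, ma.2 + mb.2) := by
  simp [mulMono, eq_comm]

lemma mem_foldr_mulMono {l : List (Multiset (Monomial N))} {m : Monomial N}
    (hm : m ∈ l.foldr mulMono {(1, 0)}) :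
    ∃ ms : List (Monomial N), List.Forall₂ (· ∈ ·) ms l ∧
      m.2 = (ms.map Prod.snd).sum := by
  induction l generalizing m with
  | nil =>
    simp only [List.foldr_nil, Multiset.mem_singleton] at hm
    exact ⟨[], List.Forall₂.nil, by simp [hm]⟩
  | cons a l ih =>
    rw [List.foldr_cons] at hm
    obtain ⟨ma, hma, mb, hmb, rfl⟩ := mem_mulMono.1 hm
    obtain ⟨ms, h1, h2⟩ := ih hmb
    exact ⟨ma :: ms, List.Forall₂.cons hma h1, by simp [h2]⟩

lemma countP_list_sum {α : Type*} (p : α → Prop) [DecidablePred p]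
    (l : List (Multiset α)) :
    Multiset.countP p l.sum = (l.map (Multiset.countP p)).sum := by
  induction l with
  | nil => simp
  | cons a l ih => simp [ih]

lemma list_map_sum_get {α β : Type*} [AddCommMonoid β] (g : α → β) :
    ∀ ms : List α, (ms.map g).sum = ∑ j : Fin ms.length, g (ms.get j)
  | [] => by simp
  | a :: ms => by
    rw [List.map_cons, List.sum_cons, list_map_sum_get g ms]
    exact (Fin.sum_univ_succ fun j : Fin (ms.length + 1) => g ((a :: ms).get j)).symm

lemma monomial_count (S : SPN N) (hc : S.complete) (hd : S.decomposable)
    (m : Monomial N) (hm : m ∈ S.monomials) (i : Fin N) :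
    (m.2.filter fun p => p.1 = i).card = if i ∈ S.scope then 1 else 0 := by
  induction S generalizing m with
  | leaf i0 b =>
    simp only [monomials, Multiset.mem_singleton] at hm
    subst hm
    rcases eq_or_ne i0 i with rfl | h
    · simp [scope, Multiset.filter_singleton]
    · simp [scope, Multiset.filter_singleton, h, Ne.symm h]
  | sum k w ch ih =>
    simp only [monomials, Multiset.mem_sum, Multiset.mem_map, Finset.mem_univ,
      true_and] at hm
    obtain ⟨j, m', hm', rfl⟩ := hm
    have := ih j (hc.2 j) (hd j) m' hm'
    rw [this]
    have hiff : i ∈ (ch j).scope ↔ i ∈ (SPN.sum k w ch).scope := by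
      simp only [scope, Finset.mem_biUnion, Finset.mem_univ, true_and]
      constructor
      · exact fun h => ⟨j, h⟩
      · rintro ⟨j', h⟩; rw [hc.1 j j']; exact h
    simp [hiff]
  | prod k ch ih =>
    obtain ⟨ms, hms, hsum⟩ := mem_foldr_mulMono hm
    have hlen : ms.length = k := by
      simpa using hms.length_eq
    rw [← Multiset.countP_eq_card_filter, hsum, countP_list_sum]
    have hget : ∀ (j : Fin ms.length),
        Multiset.countP (fun p => p.1 = i) (ms.get j).2 =
          if i ∈ (ch (Fin.cast hlen j)).scope then 1 else 0 := by
      intro j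
      have hmem : ms.get j ∈ (List.ofFn fun j : Fin k => monomials (ch j)).get
          (Fin.cast (by simpa using hms.length_eq) j) := hms.get _ _
      rw [List.get_ofFn] at hmem
      have := ih _ (hc _) (hd.2 _) _ hmem
      rw [← Multiset.countP_eq_card_filter] at this
      convert this using 3
      rfl
    calc (List.map (Multiset.countP fun p => p.1 = i) (List.map Prod.snd ms)).sum
        = ∑ j : Fin ms.length, Multiset.countP (fun p => p.1 = i) (ms.get j).2 := by
          rw [List.map_map, list_map_sum_get]
          rfl
      _ = ∑ j : Fin ms.length, if i ∈ (ch (Fin.cast hlen j)).scope then 1 else 0 := by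
          exact Finset.sum_congr rfl fun j _ => hget j
      _ = ∑ j : Fin k, if i ∈ (ch j).scope then 1 else 0 :=
          Fintype.sum_equiv (finCongr hlen) _ _ (fun j => rfl)
      _ = if i ∈ (SPN.prod k ch).scope then 1 else 0 := by
          rw [Finset.sum_ite_zero Finset.univ (fun j => i ∈ (ch j).scope)
            (fun j1 _ j2 _ h1 h2 => by
              by_contra hne
              exact Finset.disjoint_left.1 (hd.1 j1 j2 hne) h1 h2) 1]
          simp [scope]

end SPN

/-- In a complete SPN, for every sum node the scope of the node
equals the scope of each of its children, and (assuming additionally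
decomposability) every monomial in the fully expanded sum-of-products form of
the network polynomial contains exactly one indicator for each variable of the
scope. -/
theorem spn_complete_scope_and_monomials {N : ℕ} (S : SPN N)
    (hc : S.complete) (hd : S.decomposable) :
    (∀ (k : ℕ) (w : Fin k → ℝ) (ch : Fin k → SPN N),
      S = SPN.sum k w ch → ∀ j, (ch j).scope = S.scope) ∧
    (∀ m ∈ S.monomials, ∀ i ∈ S.scope,
      (m.2.filter fun p => p.1 = i).card = 1) := by
  constructor
  · rintro k w ch rfl j
    apply Finset.Subset.antisymm
    · exact Finset.subset_biUnion_of_mem (fun j' => (ch j').scope) (Finset.mem_univ j)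
    · exact Finset.biUnion_subset.2 fun j' _ => le_of_eq (hc.1 j' j)
  · intro m hm i hi
    rw [SPN.monomial_count S hc hd m hm i, if_pos hi]
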